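/- If Θ : (0,∞) → (0,2] satisfies Θ(t) → 0 as t → 0⁺, then there exists a function Ω : (0,∞) → (0,∞) such that: (1) Ω(t) ≥ 2Θ(t) for all t > 0; (2) Ω(t) → 0 as t → 0⁺; and (3) Ω(A) + 2B ≤ Ω(A+B) for all A, B > 0. -/

import Mathlib

open Set Filter

/-- Lemma 5.1 of the paper: upgrading `Θ` to a function `Ω` with the
superadditivity-type property (3). -/
theorem statement14 (Θ : ℝ → ℝ) (hΘ : ∀ t > (0:ℝ), 0 < Θ t ∧ Θ t ≤ 2)
    (hΘ0 : Tendsto Θ (nhdsWithin 0 (Ioi 0)) (nhds 0)) :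
    ∃ Ω : ℝ → ℝ, (∀ t > (0:ℝ), 0 < Ω t) ∧ (∀ t > (0:ℝ), 2 * Θ t ≤ Ω t) ∧
      Tendsto Ω (nhdsWithin 0 (Ioi 0)) (nhds 0) ∧
      ∀ A B : ℝ, 0 < A → 0 < B → Ω A + 2 * B ≤ Ω (A + B) := by
  set S : ℝ → ℝ := fun t => sSup (Θ '' Ioc 0 t) with hS
  have hbdd : ∀ t : ℝ, BddAbove (Θ '' Ioc 0 t) := by
    intro t
    refine ⟨2, ?_⟩
    rintro x ⟨s, hs, rfl⟩
    exact (hΘ s hs.1).2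
  have hSle : ∀ t > (0:ℝ), Θ t ≤ S t := by
    intro t ht
    exact le_csSup (hbdd t) ⟨t, ⟨ht, le_rfl⟩, rfl⟩
  have hSpos : ∀ t > (0:ℝ), 0 < S t := fun t ht => (hΘ t ht).1.trans_le (hSle t ht)
  have hSmono : ∀ a b : ℝ, 0 < a → a ≤ b → S a ≤ S b := by
    intro a b ha hab
    refine csSup_le_csSup (hbdd b) ⟨Θ a, mem_image_of_mem Θ ⟨ha, le_rfl⟩⟩ ?_
    exact image_mono (Ioc_subset_Ioc_right hab)
  refine ⟨fun t => 2 * t + 2 * S t, ?_, ?_, ?_, ?_⟩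
  · intro t ht
    have := hSpos t ht
    simp only
    nlinarith
  · intro t ht
    have h1 := hSle t ht
    simp only
    nlinarith
  · rw [Metric.tendsto_nhdsWithin_nhds] at hΘ0 ⊢
    intro ε hε
    obtain ⟨η, hη, hΘη⟩ := hΘ0 (ε/6) (by linarith)
    refine ⟨min η (ε/6), lt_min hη (by linarith), ?_⟩
    intro t ht hdist
    have ht0 : 0 < t := ht
    rw [Real.dist_eq, sub_zero, abs_of_pos ht0] at hdist
    have htη : t < η := lt_of_lt_of_le hdist (min_le_left _ _)
    have htε : t < ε/6 := lt_of_lt_of_le hdist (min_le_right _ _)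
    have hSt : S t ≤ ε/6 := by
      refine csSup_le ⟨Θ t, mem_image_of_mem Θ ⟨ht0, le_rfl⟩⟩ ?_
      rintro x ⟨s, hs, rfl⟩
      have := hΘη hs.1 (by rw [Real.dist_eq, sub_zero, abs_of_pos hs.1]; linarith [hs.2])
      rw [Real.dist_eq, sub_zero] at this
      exact le_of_lt (lt_of_le_of_lt (le_abs_self _) this)
    rw [Real.dist_eq, sub_zero]
    have h0 : 0 < 2 * t + 2 * S t := by nlinarith [hSpos t ht0]
    rw [abs_of_pos h0]
    linarith [hSpos t ht0]
  · intro A B hA hB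
    have h1 : S A ≤ S (A + B) := hSmono A (A + B) hA (by linarith)
    simp only
    linarith
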